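/- Let V ⊆ ℂ be a closed disk, i.e., V = {z ∈ ℂ : |z − c| ≤ ρ} for some c ∈ ℂ and ρ ≥ 0. Then the product set V·V = {v·w : v, w ∈ V} coincides with the set of squares {v² : v ∈ V}. -/

import Mathlib

noncomputable section

set_option maxHeartbeats 1000000 in
/-- Core lemma: for a disk centered at a nonnegative real `c`, the product of two
points of the disk has a square root in the disk. -/
lemma key_sqrt_in_disk (c ρ : ℝ) (hc : 0 ≤ c) (hρ : 0 ≤ ρ) (v w : ℂ)
    (hv : ‖v - (c : ℂ)‖ ≤ ρ) (hw : ‖w - (c : ℂ)‖ ≤ ρ) :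
    ∃ u : ℂ, ‖u - (c : ℂ)‖ ≤ ρ ∧ u ^ 2 = v * w := by
  rcases eq_or_ne v 0 with rfl | hv0
  · exact ⟨0, by simpa using hv, by ring⟩
  rcases eq_or_ne w 0 with rfl | hw0
  · exact ⟨0, by simpa using hw, by ring⟩
  obtain ⟨t, ht⟩ := IsAlgClosed.exists_pow_nat_eq (v * w) (n := 2) (by norm_num)
  set s : ℂ := if 0 ≤ t.re then t else -t with hsdef
  have hs2 : s ^ 2 = v * w := by
    rw [hsdef]; split_ifs
    · exact ht
    · simpa using ht
  have hsre : 0 ≤ s.re := by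
    rw [hsdef]; split_ifs with h
    · exact h
    · simp only [Complex.neg_re]; linarith [lt_of_not_ge h]
  set x := ‖v‖ with hxdef
  set y := ‖w‖ with hydef
  have hx0 : 0 < x := norm_pos_iff.mpr hv0
  have hy0 : 0 < y := norm_pos_iff.mpr hw0
  have hx : x ^ 2 = v.re ^ 2 + v.im ^ 2 := by
    rw [hxdef, Complex.sq_norm, Complex.normSq_apply]; ring
  have hy : y ^ 2 = w.re ^ 2 + w.im ^ 2 := by
    rw [hydef, Complex.sq_norm, Complex.normSq_apply]; ring
  have hP : s.re ^ 2 + s.im ^ 2 = x * y := by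
    have h1 : ‖s‖ ^ 2 = x * y := by
      rw [← norm_pow, hs2, norm_mul]
    rw [← h1, Complex.sq_norm, Complex.normSq_apply]; ring
  have hR : 2 * s.re ^ 2 = x * y + (v.re * w.re - v.im * w.im) := by
    have h1 : (v * w).re = v.re * w.re - v.im * w.im := Complex.mul_re v w
    have h2 : (s ^ 2).re = s.re ^ 2 - s.im ^ 2 := by
      rw [sq, Complex.mul_re]; ring
    rw [hs2, h1] at h2
    linarith [hP]
  have hvball : (v.re - c) ^ 2 + v.im ^ 2 ≤ ρ ^ 2 := by
    have h1 : Complex.normSq (v - (c : ℂ)) ≤ ρ ^ 2 := by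
      rw [← Complex.sq_norm]
      exact pow_le_pow_left₀ (norm_nonneg _) hv 2
    simp only [Complex.normSq_apply, Complex.sub_re, Complex.sub_im, Complex.ofReal_re,
      Complex.ofReal_im, sub_zero] at h1
    nlinarith [h1]
  have hwball : (w.re - c) ^ 2 + w.im ^ 2 ≤ ρ ^ 2 := by
    have h1 : Complex.normSq (w - (c : ℂ)) ≤ ρ ^ 2 := by
      rw [← Complex.sq_norm]
      exact pow_le_pow_left₀ (norm_nonneg _) hw 2
    simp only [Complex.normSq_apply, Complex.sub_re, Complex.sub_im, Complex.ofReal_re,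
      Complex.ofReal_im, sub_zero] at h1
    nlinarith [h1]
  -- key claim: x*y + c^2 - ρ^2 ≤ 2*c*s.re
  have hclaim : x * y + c ^ 2 - ρ ^ 2 ≤ 2 * c * s.re := by
    have hA : x * y + c ^ 2 - ρ ^ 2 ≤ x * y - x ^ 2 + 2 * c * v.re := by nlinarith
    have hB : x * y + c ^ 2 - ρ ^ 2 ≤ x * y - y ^ 2 + 2 * c * w.re := by nlinarith
    have hid : 2 * (x * y) * (2 * c ^ 2 * (x * y + (v.re * w.re - v.im * w.im))
          - (x * y - x ^ 2 + 2 * c * v.re) * (x * y - y ^ 2 + 2 * c * w.re))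
        = 2 * (x * y * (x - y) - c * (v.re * y - w.re * x)) ^ 2
          + 2 * c ^ 2 * (v.im * y - w.im * x) ^ 2 := by
      linear_combination (2 * c ^ 2 * y ^ 2) * hx + (2 * c ^ 2 * x ^ 2) * hy
    have hAB : (x * y - x ^ 2 + 2 * c * v.re) * (x * y - y ^ 2 + 2 * c * w.re)
        ≤ 2 * c ^ 2 * (x * y + (v.re * w.re - v.im * w.im)) := by
      nlinarith [hid, mul_pos hx0 hy0,
        sq_nonneg (x * y * (x - y) - c * (v.re * y - w.re * x)),
        sq_nonneg (v.im * y - w.im * x), sq_nonneg c]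
    rcases le_or_gt (x * y + c ^ 2 - ρ ^ 2) 0 with hL | hL
    · nlinarith [mul_nonneg hc hsre]
    · have hL2 : (x * y + c ^ 2 - ρ ^ 2) * (x * y + c ^ 2 - ρ ^ 2)
          ≤ (x * y - x ^ 2 + 2 * c * v.re) * (x * y - y ^ 2 + 2 * c * w.re) :=
        mul_le_mul hA hB hL.le (le_trans hL.le hA)
      have h4 : (2 * c * s.re) ^ 2 = 2 * c ^ 2 * (x * y + (v.re * w.re - v.im * w.im)) := by
        have h5 : (2 * c * s.re) ^ 2 = 2 * c ^ 2 * (2 * s.re ^ 2) := by ring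
        rw [h5, hR]
      nlinarith [mul_nonneg (mul_nonneg hc hc) (mul_nonneg hsre hsre),
        mul_nonneg hc hsre]
  refine ⟨s, ?_, hs2⟩
  have hfin : ‖s - (c : ℂ)‖ ^ 2 ≤ ρ ^ 2 := by
    have h1 : ‖s - (c : ℂ)‖ ^ 2 = (s.re - c) ^ 2 + s.im ^ 2 := by
      rw [Complex.sq_norm, Complex.normSq_apply]
      simp only [Complex.sub_re, Complex.sub_im, Complex.ofReal_re, Complex.ofReal_im, sub_zero]
      ring
    rw [h1]; nlinarith
  nlinarith [norm_nonneg (s - (c : ℂ))]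

/-- General version: for any complex center. -/
lemma sqrt_in_disk (c : ℂ) (ρ : ℝ) (hρ : 0 ≤ ρ) (v w : ℂ)
    (hv : v ∈ Metric.closedBall c ρ) (hw : w ∈ Metric.closedBall c ρ) :
    ∃ u ∈ Metric.closedBall c ρ, u ^ 2 = v * w := by
  simp only [Metric.mem_closedBall, Complex.dist_eq] at hv hw ⊢
  rcases eq_or_ne c 0 with rfl | hc0
  · obtain ⟨u, hu1, hu2⟩ := key_sqrt_in_disk 0 ρ le_rfl hρ v w (by simpa using hv)
      (by simpa using hw)
    exact ⟨u, by simpa using hu1, hu2⟩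
  · set r : ℝ := ‖c‖ with hrdef
    have hr0 : 0 < r := norm_pos_iff.mpr hc0
    set e : ℂ := c / (r : ℂ) with hedef
    have hrne : (r : ℂ) ≠ 0 := by
      exact_mod_cast Complex.ofReal_ne_zero.mpr hr0.ne'
    have he0 : e ≠ 0 := div_ne_zero hc0 hrne
    have hea : ‖e‖ = 1 := by
      rw [hedef, norm_div, Complex.norm_real, Real.norm_eq_abs, abs_of_pos hr0, div_self hr0.ne']
    have hec : e * (r : ℂ) = c := by
      rw [hedef]; field_simp
    have hv' : ‖v / e - (r : ℂ)‖ ≤ ρ := by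
      have : v / e - (r : ℂ) = (v - c) / e := by
        rw [← hec]; field_simp
      rw [this, norm_div, hea, div_one]; exact hv
    have hw' : ‖w / e - (r : ℂ)‖ ≤ ρ := by
      have : w / e - (r : ℂ) = (w - c) / e := by
        rw [← hec]; field_simp
      rw [this, norm_div, hea, div_one]; exact hw
    obtain ⟨u₀, hu1, hu2⟩ := key_sqrt_in_disk r ρ hr0.le hρ (v / e) (w / e) hv' hw'
    refine ⟨e * u₀, ?_, ?_⟩
    · have : e * u₀ - c = e * (u₀ - (r : ℂ)) := by rw [← hec]; ring
      rw [this, norm_mul, hea, one_mul]; exact hu1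
    · have : (e * u₀) ^ 2 = e ^ 2 * (u₀ ^ 2) := by ring
      rw [this, hu2]; field_simp

/-- The product set `V·V = {v·w : v, w ∈ V}`. -/
def prodSet (V : Set ℂ) : Set ℂ := {z | ∃ v ∈ V, ∃ w ∈ V, z = v * w}

/-- **Theorem.** For a closed disk `V ⊆ ℂ`, the product set `V·V` coincides with the
set of squares `{v² : v ∈ V}` (a consequence of the Grace–Walsh–Szegő theorem). -/
theorem closedBall_mul_self_eq_squares (c : ℂ) (ρ : ℝ) (hρ : 0 ≤ ρ) :
    prodSet (Metric.closedBall c ρ)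
      = {z | ∃ v ∈ Metric.closedBall c ρ, z = v ^ 2} := by
  ext z
  constructor
  · rintro ⟨v, hv, w, hw, rfl⟩
    obtain ⟨u, hu, hu2⟩ := sqrt_in_disk c ρ hρ v w hv hw
    exact ⟨u, hu, hu2.symm⟩
  · rintro ⟨v, hv, rfl⟩
    exact ⟨v, hv, v, hv, sq v⟩

end
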